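/- Let d = 1, T = 2, R(z) = |z| (so ∂R(0) = [−1,1]), E(z) = (1/2)z² − z, z₀ = 0, and for n ∈ ℕ, n ≥ 1, let ℓ_n : [0,2] → ℝ be given by ℓ_n(t) = 0 for t ∈ [0,1], ℓ_n(t) = (n/2)(t−1) for t ∈ (1, 1+1/n), ℓ_n(t) = 1/2 for t ∈ [1+1/n, 2]. Define S_n = 5/2 and, for s ∈ [0, 5/2]: ẑ_n(s) = 0 on [0,1], ẑ_n(s) = (n/(n+2))(s−1) on (1, 3/2 + 1/n), ẑ_n(s) = 1/2 on [3/2 + 1/n, 5/2]; t̂_n(s) = s on [0,1], t̂_n(s) = (2s + n)/(n+2) on (1, 3/2 + 1/n), t̂_n(s) = s − 1/2 on [3/2 + 1/n, 5/2]; and ℓ̂_n(s) = ℓ_n(t̂_n(s)), i.e. ℓ̂_n = 0 on [0,1], ℓ̂_n(s) = (n/(n+2))(s−1) on (1, 3/2 + 1/n), ℓ̂_n = 1/2 on [3/2 + 1/n, 5/2]. Then (S_n, t̂_n, ẑ_n, ℓ̂_n) satisfies all conditions (2.1)–(2.5) with D_zÎ_n(s,z) = z − 1 − ℓ̂_n(s),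 i.e. it is a normalized p-parametrized BV solution associated with ℓ_n. (Section 2.1) -/

import Mathlib

open MeasureTheory Set Filter
open scoped Topology NNReal

noncomputable section

/-- `dist(η, [-1,1]) = max(|η| - 1, 0)`, the distance to `∂R(0)` for `R = |·|`. -/
def dist1 (η : ℝ) : ℝ := max (|η| - 1) 0

/-- The energy `E(z) = z²/2 - z` of the one-dimensional example. -/
def En1 (z : ℝ) : ℝ := (1 / 2) * z ^ 2 - z

/-- The set `M` where `t̂` is strictly increasing. -/
def Mset (S : ℝ) (that : ℝ → ℝ) : Set ℝ :=
  {s | s ∈ Ioo 0 S ∧ ∀ s₁ ∈ Icc 0 S, ∀ s₂ ∈ Icc 0 S, s₁ < s → s < s₂ → that s₁ < that s₂}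

/-- Conditions (2.1)-(2.4) in the one-dimensional example, where `R = |·|` and
`D_zÎ(s,z) = z - 1 - ℓ̂(s)`; `t'`, `z'` denote the a.e. derivatives of `t̂`, `ẑ`. -/
structure Conds1d (T z₀ S : ℝ) (that zhat lhat t' z' : ℝ → ℝ) : Prop where
  deriv_t : ∀ᵐ s ∂(volume.restrict (Ioo 0 S)), HasDerivAt that (t' s) s
  deriv_z : ∀ᵐ s ∂(volume.restrict (Ioo 0 S)), HasDerivAt zhat (z' s) s
  t_init : that 0 = 0
  t_final : that S = T
  z_init : zhat 0 = z₀
  c22 : ∀ᵐ s ∂(volume.restrict (Ioo 0 S)),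
      0 ≤ t' s ∧ t' s * dist1 (-(zhat s - 1 - lhat s)) = 0
  c23 : ∀ᵐ s ∂(volume.restrict (Ioo 0 S)),
      t' s + |z' s| + |z' s| * dist1 (-(zhat s - 1 - lhat s)) = 1
  c24 : ∀ s₁ s₂ : ℝ, 0 ≤ s₁ → s₁ ≤ s₂ → s₂ ≤ S →
      En1 (zhat s₂) +
          (∫ r in s₁..s₂, (|z' r| + |z' r| * dist1 (-(zhat r - 1 - lhat r)))) =
        En1 (zhat s₁) + ∫ r in s₁..s₂, lhat r * z' r

/-- One-sided limits of the load, with the conventions at the endpoints. -/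
def OneSided1d (T : ℝ) (l lL lR : ℝ → ℝ) : Prop :=
  (∀ t ∈ Ioc (0 : ℝ) T, Tendsto l (nhdsWithin t (Iio t)) (nhds (lL t))) ∧ lL 0 = l 0 ∧
    (∀ t ∈ Ico (0 : ℝ) T, Tendsto l (nhdsWithin t (Ioi t)) (nhds (lR t))) ∧ lR T = l T

/-- The compatibility condition (2.5). -/
def Compat1d (T S : ℝ) (that lhat l lL lR : ℝ → ℝ) : Prop :=
  ∀ tstar ∈ Icc (0 : ℝ) T, ∃ sstar ∈ Icc (0 : ℝ) S, that sstar = tstar ∧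
    lhat sstar ∈ ({l tstar, lL tstar, lR tstar} : Set ℝ) ∧
    ∀ s ∈ Icc (0 : ℝ) S, that s = tstar →
      (s < sstar → lhat s = lL tstar) ∧ (sstar < s → lhat s = lR tstar)

/-- The loads of the first counterexample (Section 2.1). -/
def loadn (n : ℕ) (t : ℝ) : ℝ :=
  if t ≤ 1 then 0 else if t < 1 + 1 / (n : ℝ) then ((n : ℝ) / 2) * (t - 1) else 1 / 2

/-- The parametrized time `t̂ₙ` of (2.9). -/
def thatn (n : ℕ) (s : ℝ) : ℝ :=
  if s ≤ 1 then s else if s < 3 / 2 + 1 / (n : ℝ) then (2 * s + (n : ℝ)) / ((n : ℝ) + 2)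
  else s - 1 / 2

/-- The parametrized state `ẑₙ` of (2.8). -/
def zhatn (n : ℕ) (s : ℝ) : ℝ :=
  if s ≤ 1 then 0 else if s < 3 / 2 + 1 / (n : ℝ) then ((n : ℝ) / ((n : ℝ) + 2)) * (s - 1)
  else 1 / 2

/-- The parametrized load `ℓ̂ₙ = ℓₙ ∘ t̂ₙ` of (2.10). -/
def lhatn (n : ℕ) (s : ℝ) : ℝ := loadn n (thatn n s)

/-- The a.e. derivative of `t̂ₙ`. -/
def t'n (n : ℕ) (s : ℝ) : ℝ :=
  if s ≤ 1 then 1 else if s < 3 / 2 + 1 / (n : ℝ) then 2 / ((n : ℝ) + 2) else 1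

/-- The a.e. derivative of `ẑₙ`. -/
def z'n (n : ℕ) (s : ℝ) : ℝ :=
  if s ≤ 1 then 0 else if s < 3 / 2 + 1 / (n : ℝ) then (n : ℝ) / ((n : ℝ) + 2) else 0


namespace FirstCounterexample

variable {n : ℕ}

lemma hN' (hn : 1 ≤ n) : (1:ℝ) ≤ (n:ℝ) := by exact_mod_cast hn

lemma thatn_eq (hn : 1 ≤ n) (s : ℝ) :
    thatn n s = min s (max ((2*s + (n:ℝ))/((n:ℝ)+2)) (s - 1/2)) := by
  have hN : (1:ℝ) ≤ (n:ℝ) := hN' hn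
  have hN2 : (0:ℝ) < (n:ℝ) + 2 := by linarith
  have hNpos : (0:ℝ) < (n:ℝ) := by linarith
  unfold thatn
  split_ifs with h1 h2
  · rw [max_eq_left, min_eq_left]
    · rw [le_div_iff₀ hN2]; nlinarith
    · rw [le_div_iff₀ hN2]; nlinarith
  · push_neg at h1
    have h2' : (s - 3/2) * (n:ℝ) < 1 := (lt_div_iff₀ hNpos).1 (by linarith)
    rw [max_eq_left, min_eq_right]
    · rw [div_le_iff₀ hN2]; nlinarith
    · rw [le_div_iff₀ hN2]; nlinarith
  · push_neg at h1 h2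
    have h2' : (1:ℝ) ≤ (s - 3/2) * (n:ℝ) := (div_le_iff₀ hNpos).1 (by linarith)
    rw [max_eq_right, min_eq_right]
    · linarith
    · rw [div_le_iff₀ hN2]; nlinarith

lemma zhatn_eq (hn : 1 ≤ n) (s : ℝ) :
    zhatn n s = min (max (((n:ℝ)/((n:ℝ)+2)) * (s-1)) 0) (1/2) := by
  have hN : (1:ℝ) ≤ (n:ℝ) := hN' hn
  have hN2 : (0:ℝ) < (n:ℝ) + 2 := by linarith
  have hNpos : (0:ℝ) < (n:ℝ) := by linarith
  unfold zhatn
  split_ifs with h1 h2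
  · rw [max_eq_right, min_eq_left]
    · norm_num
    · rw [div_mul_eq_mul_div, div_nonpos_iff]
      right; constructor <;> nlinarith
  · push_neg at h1
    have h2' : (s - 3/2) * (n:ℝ) < 1 := (lt_div_iff₀ hNpos).1 (by linarith)
    rw [max_eq_left, min_eq_left]
    · rw [div_mul_eq_mul_div, div_le_iff₀ hN2]; nlinarith
    · rw [div_mul_eq_mul_div, le_div_iff₀ hN2]; nlinarith
  · push_neg at h1 h2
    have h2' : (1:ℝ) ≤ (s - 3/2) * (n:ℝ) := (div_le_iff₀ hNpos).1 (by linarith)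
    rw [min_eq_right]
    refine le_max_of_le_left ?_
    rw [div_mul_eq_mul_div, le_div_iff₀ hN2]; nlinarith

lemma loadn_eq (hn : 1 ≤ n) (t : ℝ) :
    loadn n t = min (max (((n:ℝ)/2) * (t-1)) 0) (1/2) := by
  have hN : (1:ℝ) ≤ (n:ℝ) := hN' hn
  have hNpos : (0:ℝ) < (n:ℝ) := by linarith
  unfold loadn
  split_ifs with h1 h2
  · rw [max_eq_right, min_eq_left]
    · norm_num
    · rw [div_mul_eq_mul_div, div_nonpos_iff]
      right; constructor <;> nlinarith
  · push_neg at h1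
    have h2' : (t - 1) * (n:ℝ) < 1 := (lt_div_iff₀ hNpos).1 (by linarith)
    rw [max_eq_left, min_eq_left]
    · rw [div_mul_eq_mul_div, div_le_iff₀ (by norm_num : (0:ℝ) < 2)]; nlinarith
    · rw [div_mul_eq_mul_div, le_div_iff₀ (by norm_num : (0:ℝ) < 2)]; nlinarith
  · push_neg at h1 h2
    have h2' : (1:ℝ) ≤ (t - 1) * (n:ℝ) := (div_le_iff₀ hNpos).1 (by linarith)
    rw [min_eq_right]
    refine le_max_of_le_left ?_
    rw [div_mul_eq_mul_div, le_div_iff₀ (by norm_num : (0:ℝ) < 2)]; nlinarith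

lemma lhatn_eq (hn : 1 ≤ n) (s : ℝ) : lhatn n s = zhatn n s := by
  have hN : (1:ℝ) ≤ (n:ℝ) := hN' hn
  have hN2 : (0:ℝ) < (n:ℝ) + 2 := by linarith
  have hNpos : (0:ℝ) < (n:ℝ) := by linarith
  have h1n : (0:ℝ) < 1/(n:ℝ) := by positivity
  have h1n' : 1/(n:ℝ) ≤ 1 := by rw [div_le_one hNpos]; linarith
  unfold lhatn zhatn thatn
  rcases le_or_gt s 1 with h1 | h1
  · rw [if_pos h1, if_pos h1]
    unfold loadn; rw [if_pos h1]
  · rw [if_neg (not_le.2 h1), if_neg (not_le.2 h1)]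
    rcases lt_or_ge s (3/2 + 1/(n:ℝ)) with h2 | h2
    · rw [if_pos h2, if_pos h2]
      unfold loadn
      have ha : ¬ ((2*s + (n:ℝ))/((n:ℝ)+2) ≤ 1) := by
        rw [not_le, lt_div_iff₀ hN2]; linarith
      have hb : (2*s + (n:ℝ))/((n:ℝ)+2) < 1 + 1/(n:ℝ) := by
        rw [div_lt_iff₀ hN2]
        have h2' : (s - 3/2) * (n:ℝ) < 1 := (lt_div_iff₀ hNpos).1 (by linarith)
        have hexp : (1 + 1/(n:ℝ)) * ((n:ℝ)+2) = (n:ℝ) + 3 + 2/(n:ℝ) := by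
          field_simp; ring
        rw [hexp]
        have h3 : (s - 3/2) < 1/(n:ℝ) := by linarith
        have h5 : 2/(n:ℝ) = 2*(1/(n:ℝ)) := by ring
        linarith
      rw [if_neg ha, if_pos hb]
      field_simp
      ring
    · rw [if_neg (not_lt.2 h2), if_neg (not_lt.2 h2)]
      unfold loadn
      have ha : ¬ (s - 1/2 ≤ 1) := by push_neg; linarith
      have hb : ¬ (s - 1/2 < 1 + 1/(n:ℝ)) := by push_neg; linarith
      rw [if_neg ha, if_neg hb]

lemma lip_thatn (hn : 1 ≤ n) : ∃ L : ℝ≥0, LipschitzOnWith L (thatn n) (Icc 0 (5/2)) := by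
  have hN : (1:ℝ) ≤ (n:ℝ) := hN' hn
  have hN2 : (0:ℝ) < (n:ℝ) + 2 := by linarith
  have hfun : thatn n = fun s => min s (max ((2*s + (n:ℝ))/((n:ℝ)+2)) (s - 1/2)) :=
    funext (thatn_eq hn)
  have l1 : LipschitzWith 1 (fun s : ℝ => s) := LipschitzWith.id
  have l2 : LipschitzWith 1 (fun s : ℝ => (2*s + (n:ℝ))/((n:ℝ)+2)) := by
    refine LipschitzWith.of_dist_le_mul fun x y => ?_
    rw [Real.dist_eq, Real.dist_eq]
    have h : (2*x + (n:ℝ))/((n:ℝ)+2) - (2*y + (n:ℝ))/((n:ℝ)+2) = (2/((n:ℝ)+2)) * (x - y) := by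
      field_simp; ring
    rw [h, abs_mul, abs_of_nonneg (by positivity : (0:ℝ) ≤ 2/((n:ℝ)+2))]
    have hle : 2/((n:ℝ)+2) ≤ 1 := by rw [div_le_one hN2]; linarith
    rw [NNReal.coe_one, one_mul]
    exact mul_le_of_le_one_left (abs_nonneg _) hle
  have l3 : LipschitzWith 1 (fun s : ℝ => s - 1/2) := by
    refine LipschitzWith.of_dist_le_mul fun x y => ?_
    rw [Real.dist_eq, Real.dist_eq]
    simp
  refine ⟨1 ⊔ (1 ⊔ 1), ?_⟩
  rw [hfun]
  exact (l1.min (l2.max l3)).lipschitzOnWith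

lemma lip_zhatn (hn : 1 ≤ n) : ∃ L : ℝ≥0, LipschitzOnWith L (zhatn n) (Icc 0 (5/2)) := by
  have hN : (1:ℝ) ≤ (n:ℝ) := hN' hn
  have hN2 : (0:ℝ) < (n:ℝ) + 2 := by linarith
  have hfun : zhatn n = fun s => min (max (((n:ℝ)/((n:ℝ)+2)) * (s-1)) 0) (1/2) :=
    funext (zhatn_eq hn)
  have l1 : LipschitzWith 1 (fun s : ℝ => ((n:ℝ)/((n:ℝ)+2)) * (s-1)) := by
    refine LipschitzWith.of_dist_le_mul fun x y => ?_
    rw [Real.dist_eq, Real.dist_eq]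
    have h : ((n:ℝ)/((n:ℝ)+2)) * (x-1) - ((n:ℝ)/((n:ℝ)+2)) * (y-1)
        = ((n:ℝ)/((n:ℝ)+2)) * (x - y) := by ring
    rw [h, abs_mul, abs_of_nonneg (by positivity : (0:ℝ) ≤ (n:ℝ)/((n:ℝ)+2))]
    have hle : (n:ℝ)/((n:ℝ)+2) ≤ 1 := by rw [div_le_one hN2]; linarith
    rw [NNReal.coe_one, one_mul]
    exact mul_le_of_le_one_left (abs_nonneg _) hle
  have l2 : LipschitzWith 1 (fun _ : ℝ => (0:ℝ)) := LipschitzWith.const' 0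
  have l3 : LipschitzWith 1 (fun _ : ℝ => (1/2:ℝ)) := LipschitzWith.const' (1/2)
  refine ⟨(1 ⊔ 1) ⊔ 1, ?_⟩
  rw [hfun]
  exact ((l1.max l2).min l3).lipschitzOnWith

lemma cgt1 (hn : 1 ≤ n) : (1:ℝ) < 3/2 + 1/(n:ℝ) := by
  have hN : (1:ℝ) ≤ (n:ℝ) := hN' hn
  have : (0:ℝ) < 1/(n:ℝ) := by positivity
  linarith

lemma thatn_hasDeriv (hn : 1 ≤ n) {s : ℝ} (h1 : s ≠ 1) (h2 : s ≠ 3/2 + 1/(n:ℝ)) :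
    HasDerivAt (thatn n) (t'n n s) s := by
  have hN : (1:ℝ) ≤ (n:ℝ) := hN' hn
  have hN2 : (0:ℝ) < (n:ℝ) + 2 := by linarith
  have hc1 : (1:ℝ) < 3/2 + 1/(n:ℝ) := cgt1 hn
  rcases lt_or_gt_of_ne h1 with hlt | hgt
  · have ht : t'n n s = 1 := by unfold t'n; rw [if_pos hlt.le]
    rw [ht]
    refine (hasDerivAt_id s).congr_of_eventuallyEq ?_
    filter_upwards [Iio_mem_nhds hlt] with x hx
    unfold thatn; rw [if_pos (le_of_lt hx)]; rfl
  · rcases lt_or_gt_of_ne h2 with hlt2 | hgt2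
    · have hd : HasDerivAt (fun x : ℝ => (2*x + (n:ℝ))/((n:ℝ)+2)) (2/((n:ℝ)+2)) s := by
        have h := (((hasDerivAt_id s).const_mul 2).add_const (n:ℝ)).div_const ((n:ℝ)+2)
        exact h.congr_deriv (by ring)
      have ht : t'n n s = 2/((n:ℝ)+2) := by
        unfold t'n; rw [if_neg (not_le.2 hgt), if_pos hlt2]
      rw [ht]
      refine hd.congr_of_eventuallyEq ?_
      filter_upwards [Ioo_mem_nhds hgt hlt2] with x hx
      unfold thatn; rw [if_neg (not_le.2 hx.1), if_pos hx.2]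
    · have ht : t'n n s = 1 := by
        unfold t'n
        rw [if_neg (not_le.2 hgt), if_neg (not_lt.2 hgt2.le)]
      rw [ht]
      refine ((hasDerivAt_id s).sub_const (1/2)).congr_of_eventuallyEq ?_
      filter_upwards [Ioi_mem_nhds hgt2] with x hx
      have hx1 : ¬ x ≤ 1 := by push_neg; linarith [mem_Ioi.1 hx, hc1]
      unfold thatn; rw [if_neg hx1, if_neg (not_lt.2 (le_of_lt hx))]; rfl

lemma zhatn_hasDeriv (hn : 1 ≤ n) {s : ℝ} (h1 : s ≠ 1) (h2 : s ≠ 3/2 + 1/(n:ℝ)) :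
    HasDerivAt (zhatn n) (z'n n s) s := by
  have hN : (1:ℝ) ≤ (n:ℝ) := hN' hn
  have hN2 : (0:ℝ) < (n:ℝ) + 2 := by linarith
  have hc1 : (1:ℝ) < 3/2 + 1/(n:ℝ) := cgt1 hn
  rcases lt_or_gt_of_ne h1 with hlt | hgt
  · have hz : z'n n s = 0 := by unfold z'n; rw [if_pos hlt.le]
    rw [hz]
    refine (hasDerivAt_const s (0:ℝ)).congr_of_eventuallyEq ?_
    filter_upwards [Iio_mem_nhds hlt] with x hx
    unfold zhatn; rw [if_pos (le_of_lt hx)]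
  · rcases lt_or_gt_of_ne h2 with hlt2 | hgt2
    · have hd : HasDerivAt (fun x : ℝ => ((n:ℝ)/((n:ℝ)+2)) * (x - 1)) ((n:ℝ)/((n:ℝ)+2)) s := by
        have h := ((hasDerivAt_id s).sub_const (1:ℝ)).const_mul ((n:ℝ)/((n:ℝ)+2))
        exact h.congr_deriv (by ring)
      have hz : z'n n s = (n:ℝ)/((n:ℝ)+2) := by
        unfold z'n; rw [if_neg (not_le.2 hgt), if_pos hlt2]
      rw [hz]
      refine hd.congr_of_eventuallyEq ?_
      filter_upwards [Ioo_mem_nhds hgt hlt2] with x hx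
      unfold zhatn; rw [if_neg (not_le.2 hx.1), if_pos hx.2]
    · have hz : z'n n s = 0 := by
        unfold z'n
        rw [if_neg (not_le.2 hgt), if_neg (not_lt.2 hgt2.le)]
      rw [hz]
      refine (hasDerivAt_const s (1/2:ℝ)).congr_of_eventuallyEq ?_
      filter_upwards [Ioi_mem_nhds hgt2] with x hx
      have hx1 : ¬ x ≤ 1 := by push_neg; linarith [mem_Ioi.1 hx, hc1]
      unfold zhatn; rw [if_neg hx1, if_neg (not_lt.2 (le_of_lt hx))]

/-- The right derivative of `zhatn`. -/
def zdn (n : ℕ) (s : ℝ) : ℝ :=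
  if s < 1 then 0 else if s < 3/2 + 1/(n:ℝ) then (n:ℝ)/((n:ℝ)+2) else 0

lemma zdn_eq_z'n (hn : 1 ≤ n) {s : ℝ} (h1 : s ≠ 1) : zdn n s = z'n n s := by
  unfold zdn z'n
  rcases lt_trichotomy s 1 with h | h | h
  · rw [if_pos h, if_pos h.le]
  · exact absurd h h1
  · rw [if_neg (not_lt.2 h.le), if_neg (not_le.2 h)]

lemma zhatn_hasDerivWithin (hn : 1 ≤ n) (x : ℝ) :
    HasDerivWithinAt (zhatn n) (zdn n x) (Ioi x) x := by
  have hN : (1:ℝ) ≤ (n:ℝ) := hN' hn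
  have hN2 : (0:ℝ) < (n:ℝ) + 2 := by linarith
  have hc1 : (1:ℝ) < 3/2 + 1/(n:ℝ) := cgt1 hn
  rcases lt_trichotomy x 1 with hlt | heq | hgt
  · have hz : zdn n x = 0 := by unfold zdn; rw [if_pos hlt]
    rw [hz]
    refine ((hasDerivAt_const x (0:ℝ)).hasDerivWithinAt).congr_of_eventuallyEq ?_ ?_
    · filter_upwards [mem_nhdsWithin_of_mem_nhds (Iio_mem_nhds hlt)] with y hy
      unfold zhatn; rw [if_pos (le_of_lt hy)]
    · unfold zhatn; rw [if_pos hlt.le]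
  · subst heq
    have hz : zdn n 1 = (n:ℝ)/((n:ℝ)+2) := by
      unfold zdn; rw [if_neg (lt_irrefl 1), if_pos hc1]
    rw [hz]
    have hd : HasDerivAt (fun y : ℝ => ((n:ℝ)/((n:ℝ)+2)) * (y - 1)) ((n:ℝ)/((n:ℝ)+2)) 1 := by
      have h := ((hasDerivAt_id (1:ℝ)).sub_const (1:ℝ)).const_mul ((n:ℝ)/((n:ℝ)+2))
      exact h.congr_deriv (by ring)
    refine hd.hasDerivWithinAt.congr_of_eventuallyEq ?_ ?_
    · filter_upwards [Ioo_mem_nhdsGT_of_mem (left_mem_Ico.2 hc1)] with y hy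
      unfold zhatn; rw [if_neg (not_le.2 hy.1), if_pos hy.2]
    · unfold zhatn; rw [if_pos le_rfl]; ring
  · rcases lt_trichotomy x (3/2 + 1/(n:ℝ)) with hlt2 | heq2 | hgt2
    · have hz : zdn n x = (n:ℝ)/((n:ℝ)+2) := by
        unfold zdn; rw [if_neg (not_lt.2 hgt.le), if_pos hlt2]
      rw [hz]
      have hd : HasDerivAt (fun y : ℝ => ((n:ℝ)/((n:ℝ)+2)) * (y - 1)) ((n:ℝ)/((n:ℝ)+2)) x := by
        have h := ((hasDerivAt_id x).sub_const (1:ℝ)).const_mul ((n:ℝ)/((n:ℝ)+2))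
        exact h.congr_deriv (by ring)
      refine hd.hasDerivWithinAt.congr_of_eventuallyEq ?_ ?_
      · filter_upwards [mem_nhdsWithin_of_mem_nhds (Ioo_mem_nhds hgt hlt2)] with y hy
        unfold zhatn; rw [if_neg (not_le.2 hy.1), if_pos hy.2]
      · unfold zhatn; rw [if_neg (not_le.2 hgt), if_pos hlt2]
    · have hz : zdn n x = 0 := by
        unfold zdn; rw [if_neg, if_neg]
        · rw [heq2]; exact lt_irrefl _
        · push_neg; linarith
      rw [hz]
      refine ((hasDerivAt_const x (1/2:ℝ)).hasDerivWithinAt).congr_of_eventuallyEq ?_ ?_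
      · filter_upwards [self_mem_nhdsWithin] with y hy
        have hy1 : ¬ y ≤ 1 := by push_neg; rw [heq2] at hy; linarith [mem_Ioi.1 hy]
        have hy2 : ¬ y < 3/2 + 1/(n:ℝ) := by push_neg; rw [heq2] at hy; linarith [mem_Ioi.1 hy]
        unfold zhatn; rw [if_neg hy1, if_neg hy2]
      · have hx1 : ¬ x ≤ 1 := by push_neg; linarith
        have hx2 : ¬ x < 3/2 + 1/(n:ℝ) := by rw [heq2]; exact lt_irrefl _
        unfold zhatn; rw [if_neg hx1, if_neg hx2]
    · have hz : zdn n x = 0 := by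
        unfold zdn; rw [if_neg, if_neg (not_lt.2 hgt2.le)]
        push_neg; linarith
      rw [hz]
      refine ((hasDerivAt_const x (1/2:ℝ)).hasDerivWithinAt).congr_of_eventuallyEq ?_ ?_
      · filter_upwards [mem_nhdsWithin_of_mem_nhds (Ioi_mem_nhds hgt2)] with y hy
        have hy1 : ¬ y ≤ 1 := by push_neg; linarith [mem_Iio.1 hy]
        have hy2 : ¬ y < 3/2 + 1/(n:ℝ) := by push_neg; linarith [mem_Iio.1 hy]
        unfold zhatn; rw [if_neg hy1, if_neg hy2]
      · have hx1 : ¬ x ≤ 1 := by push_neg; linarith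
        unfold zhatn; rw [if_neg hx1, if_neg (not_lt.2 hgt2.le)]

lemma t'n_z'n_vals (hn : 1 ≤ n) (s : ℝ) :
    0 ≤ t'n n s ∧ 0 ≤ z'n n s ∧ t'n n s + z'n n s = 1 := by
  have hN : (1:ℝ) ≤ (n:ℝ) := hN' hn
  have hN2 : (0:ℝ) < (n:ℝ) + 2 := by linarith
  unfold t'n z'n
  split_ifs
  · exact ⟨by norm_num, le_rfl, by norm_num⟩
  · refine ⟨by positivity, by positivity, ?_⟩
    rw [← add_div, div_eq_one_iff_eq (ne_of_gt hN2)]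
    ring
  · exact ⟨by norm_num, le_rfl, by norm_num⟩

lemma dist1_zero (hn : 1 ≤ n) (s : ℝ) :
    dist1 (-(zhatn n s - 1 - lhatn n s)) = 0 := by
  rw [lhatn_eq hn s]
  have h : -(zhatn n s - 1 - zhatn n s) = 1 := by ring
  rw [h]
  simp [dist1]

lemma zhatn_bounds (hn : 1 ≤ n) (s : ℝ) : 0 ≤ zhatn n s ∧ zhatn n s ≤ 1/2 := by
  rw [zhatn_eq hn s]
  constructor
  · exact le_min (le_max_right _ _) (by norm_num)
  · exact min_le_right _ _

lemma z'n_bounds (hn : 1 ≤ n) (s : ℝ) : 0 ≤ z'n n s ∧ z'n n s ≤ 1 := by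
  have hN : (1:ℝ) ≤ (n:ℝ) := hN' hn
  have hN2 : (0:ℝ) < (n:ℝ) + 2 := by linarith
  unfold z'n
  split_ifs
  · exact ⟨le_rfl, by norm_num⟩
  · exact ⟨by positivity, by rw [div_le_one hN2]; linarith⟩
  · exact ⟨le_rfl, by norm_num⟩

lemma zdn_bounds (hn : 1 ≤ n) (s : ℝ) : 0 ≤ zdn n s ∧ zdn n s ≤ 1 := by
  have hN : (1:ℝ) ≤ (n:ℝ) := hN' hn
  have hN2 : (0:ℝ) < (n:ℝ) + 2 := by linarith
  unfold zdn
  split_ifs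
  · exact ⟨le_rfl, by norm_num⟩
  · exact ⟨by positivity, by rw [div_le_one hN2]; linarith⟩
  · exact ⟨le_rfl, by norm_num⟩

lemma z'n_measurable : Measurable (z'n n) :=
  Measurable.ite measurableSet_Iic measurable_const
    (Measurable.ite measurableSet_Iio measurable_const measurable_const)

lemma zdn_measurable : Measurable (zdn n) :=
  Measurable.ite measurableSet_Iio measurable_const
    (Measurable.ite measurableSet_Iio measurable_const measurable_const)

lemma zhatn_continuous (hn : 1 ≤ n) : Continuous (zhatn n) := by
  have hfun : zhatn n = fun s => min (max (((n:ℝ)/((n:ℝ)+2)) * (s-1)) 0) (1/2) :=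
    funext (zhatn_eq hn)
  rw [hfun]
  fun_prop

lemma thatn_continuous (hn : 1 ≤ n) : Continuous (thatn n) := by
  have hfun : thatn n = fun s => min s (max ((2*s + (n:ℝ))/((n:ℝ)+2)) (s - 1/2)) :=
    funext (thatn_eq hn)
  have hN : (1:ℝ) ≤ (n:ℝ) := hN' hn
  have hne : ((n:ℝ)+2) ≠ 0 := by positivity
  rw [hfun]
  fun_prop (disch := assumption)

lemma loadn_continuous (hn : 1 ≤ n) : Continuous (loadn n) := by
  have hfun : loadn n = fun t => min (max (((n:ℝ)/2) * (t-1)) 0) (1/2) :=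
    funext (loadn_eq hn)
  rw [hfun]
  fun_prop

lemma intervalIntegrable_of_bdd {f : ℝ → ℝ} (hf : Measurable f) {C : ℝ}
    (hC : ∀ x, |f x| ≤ C) (a b : ℝ) : IntervalIntegrable f volume a b := by
  refine IntervalIntegrable.mono_fun' (g := fun _ => C) intervalIntegrable_const
    hf.aestronglyMeasurable ?_
  exact Filter.Eventually.of_forall fun x => hC x

lemma En1_hasDerivAt (z : ℝ) : HasDerivAt En1 (z - 1) z := by
  have h := ((hasDerivAt_pow 2 z).const_mul (1/2 : ℝ)).sub (hasDerivAt_id z)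
  have he : En1 = fun z : ℝ => (1/2 : ℝ) * z ^ 2 - id z := rfl
  rw [he]
  exact h.congr_deriv (by norm_num; ring)

lemma c24_lemma (hn : 1 ≤ n) (s₁ s₂ : ℝ) (h12 : s₁ ≤ s₂) :
    En1 (zhatn n s₂) +
        (∫ r in s₁..s₂, (|z'n n r| + |z'n n r| * dist1 (-(zhatn n r - 1 - lhatn n r)))) =
      En1 (zhatn n s₁) + ∫ r in s₁..s₂, lhatn n r * z'n n r := by
  have hN : (1:ℝ) ≤ (n:ℝ) := hN' hn
  -- rewrite integrands
  have hint1 : (fun r => |z'n n r| + |z'n n r| * dist1 (-(zhatn n r - 1 - lhatn n r)))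
      = z'n n := by
    funext r
    rw [dist1_zero hn r, mul_zero, add_zero, abs_of_nonneg (z'n_bounds hn r).1]
  have hint2 : (fun r => lhatn n r * z'n n r) = fun r => zhatn n r * z'n n r := by
    funext r; rw [lhatn_eq hn r]
  rw [hint1, hint2]
  -- integrability
  have hmz : Measurable (z'n n) := z'n_measurable
  have hmzh : Measurable (zhatn n) := (zhatn_continuous hn).measurable
  have hIz : IntervalIntegrable (z'n n) volume s₁ s₂ := by
    refine intervalIntegrable_of_bdd hmz (C := 1) (fun x => ?_) s₁ s₂
    rw [abs_of_nonneg (z'n_bounds hn x).1]; exact (z'n_bounds hn x).2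
  have hIzz : IntervalIntegrable (fun r => zhatn n r * z'n n r) volume s₁ s₂ := by
    refine intervalIntegrable_of_bdd (hmzh.mul hmz) (C := 1) (fun x => ?_) s₁ s₂
    simp only [Pi.mul_apply]
    rw [abs_mul, abs_of_nonneg (zhatn_bounds hn x).1, abs_of_nonneg (z'n_bounds hn x).1]
    nlinarith [(zhatn_bounds hn x).1, (zhatn_bounds hn x).2, (z'n_bounds hn x).1,
      (z'n_bounds hn x).2]
  have hIg : IntervalIntegrable (fun r => (zhatn n r - 1) * zdn n r) volume s₁ s₂ := by
    refine intervalIntegrable_of_bdd ((hmzh.sub measurable_const).mul zdn_measurable)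
      (C := 1) (fun x => ?_) s₁ s₂
    simp only [Pi.mul_apply, Pi.sub_apply]
    rw [abs_mul, abs_of_nonneg (zdn_bounds hn x).1]
    have h1 : |zhatn n x - 1| ≤ 1 := by
      rw [abs_le]; constructor
      · linarith [(zhatn_bounds hn x).1]
      · linarith [(zhatn_bounds hn x).2]
    nlinarith [abs_nonneg (zhatn n x - 1), (zdn_bounds hn x).1, (zdn_bounds hn x).2]
  -- FTC for E ∘ zhat
  have hderiv : ∀ x ∈ Ioo s₁ s₂,
      HasDerivWithinAt (fun r => En1 (zhatn n r)) ((zhatn n x - 1) * zdn n x) (Ioi x) x := by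
    intro x _
    exact (En1_hasDerivAt (zhatn n x)).comp_hasDerivWithinAt x (zhatn_hasDerivWithin hn x)
  have hcont : ContinuousOn (fun r => En1 (zhatn n r)) (Icc s₁ s₂) := by
    have : Continuous En1 := by unfold En1; fun_prop
    exact (this.comp (zhatn_continuous hn)).continuousOn
  have hftc : ∫ r in s₁..s₂, (zhatn n r - 1) * zdn n r
      = En1 (zhatn n s₂) - En1 (zhatn n s₁) :=
    intervalIntegral.integral_eq_sub_of_hasDeriv_right_of_le h12 hcont hderiv hIg
  -- replace zdn by z'n a.e.
  have hae : ∫ r in s₁..s₂, (zhatn n r - 1) * zdn n r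
      = ∫ r in s₁..s₂, (zhatn n r - 1) * z'n n r := by
    refine intervalIntegral.integral_congr_ae ?_
    have h1 : ∀ᵐ r : ℝ ∂volume, r ≠ 1 := by
      refine eventually_of_mem (compl_mem_ae_iff.2 (measure_singleton (1:ℝ))) ?_
      intro x hx
      simpa using hx
    filter_upwards [h1] with r hr _
    rw [zdn_eq_z'n hn hr]
  have hsplit : ∫ r in s₁..s₂, (zhatn n r - 1) * z'n n r
      = (∫ r in s₁..s₂, zhatn n r * z'n n r) - ∫ r in s₁..s₂, z'n n r := by
    rw [← intervalIntegral.integral_sub hIzz hIz]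
    congr 1
    funext r
    ring
  rw [hae, hsplit] at hftc
  linarith

lemma thatn_zero : thatn n 0 = 0 := by
  unfold thatn; rw [if_pos (by norm_num : (0:ℝ) ≤ 1)]

lemma thatn_final (hn : 1 ≤ n) : thatn n (5/2) = 2 := by
  have hN : (1:ℝ) ≤ (n:ℝ) := hN' hn
  have h1n' : 1/(n:ℝ) ≤ 1 := by rw [div_le_one (by linarith)]; linarith
  unfold thatn
  rw [if_neg (by norm_num), if_neg (by push_neg; linarith)]
  norm_num

lemma zhatn_zero : zhatn n 0 = 0 := by
  unfold zhatn; rw [if_pos (by norm_num : (0:ℝ) ≤ 1)]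


end FirstCounterexample

open FirstCounterexample in
/-- **Section 2.1.** `(5/2, t̂ₙ, ẑₙ, ℓ̂ₙ)` is a normalized p-parametrized BV solution
associated with `ℓₙ`: it satisfies (2.1)-(2.4) and the compatibility condition (2.5),
and `ℓ̂ₙ = ℓₙ ∘ t̂ₙ` has the asserted piecewise form. -/
theorem first_counterexample_solutions (n : ℕ) (hn : 1 ≤ n) :
    (∃ L : ℝ≥0, LipschitzOnWith L (thatn n) (Icc 0 (5 / 2))) ∧
    (∃ L : ℝ≥0, LipschitzOnWith L (zhatn n) (Icc 0 (5 / 2))) ∧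
    BoundedVariationOn (lhatn n) (Icc 0 (5 / 2)) ∧
    Conds1d 2 0 (5 / 2) (thatn n) (zhatn n) (lhatn n) (t'n n) (z'n n) ∧
    (∀ s : ℝ, (s ≤ 1 → lhatn n s = 0) ∧
      (1 < s → s < 3 / 2 + 1 / (n : ℝ) → lhatn n s = ((n : ℝ) / ((n : ℝ) + 2)) * (s - 1)) ∧
      (3 / 2 + 1 / (n : ℝ) ≤ s → lhatn n s = 1 / 2)) ∧
    (∃ lL lR : ℝ → ℝ, OneSided1d 2 (loadn n) lL lR ∧
      Compat1d 2 (5 / 2) (thatn n) (lhatn n) (loadn n) lL lR) := by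
  have hN : (1:ℝ) ≤ (n:ℝ) := hN' hn
  have h1n : (0:ℝ) < 1/(n:ℝ) := by positivity
  refine ⟨lip_thatn hn, lip_zhatn hn, ?_, ?_, ?_, ?_⟩
  · -- bounded variation
    have heq : lhatn n = zhatn n := funext (lhatn_eq hn)
    rw [heq]
    obtain ⟨L, hL⟩ := lip_zhatn hn
    have h := hL.locallyBoundedVariationOn 0 (5/2)
      (left_mem_Icc.2 (by norm_num)) (right_mem_Icc.2 (by norm_num))
    simpa [Set.inter_self] using h
  · -- Conds1d
    have hae : ∀ᵐ s : ℝ ∂volume, s ≠ 1 ∧ s ≠ 3/2 + 1/(n:ℝ) := by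
      have hfin : volume ({1, 3/2 + 1/(n:ℝ)} : Set ℝ) = 0 :=
        ((Set.finite_singleton _).insert _).measure_zero _
      refine eventually_of_mem (compl_mem_ae_iff.2 hfin) fun x hx => ?_
      simp only [Set.mem_compl_iff, Set.mem_insert_iff, Set.mem_singleton_iff] at hx
      push_neg at hx; exact hx
    exact {
      deriv_t := ae_restrict_of_ae (hae.mono fun s hs => thatn_hasDeriv hn hs.1 hs.2)
      deriv_z := ae_restrict_of_ae (hae.mono fun s hs => zhatn_hasDeriv hn hs.1 hs.2)
      t_init := thatn_zero
      t_final := thatn_final hn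
      z_init := zhatn_zero
      c22 := Filter.Eventually.of_forall fun s =>
        ⟨(t'n_z'n_vals hn s).1, by rw [dist1_zero hn s, mul_zero]⟩
      c23 := Filter.Eventually.of_forall fun s => by
        rw [dist1_zero hn s, mul_zero, add_zero, abs_of_nonneg (t'n_z'n_vals hn s).2.1]
        exact (t'n_z'n_vals hn s).2.2
      c24 := fun s₁ s₂ _ h12 _ => c24_lemma hn s₁ s₂ h12 }
  · -- piecewise form of lhatn
    intro s
    refine ⟨fun h => ?_, fun ha hb => ?_, fun h => ?_⟩
    · rw [lhatn_eq hn s]; unfold zhatn; rw [if_pos h]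
    · rw [lhatn_eq hn s]; unfold zhatn; rw [if_neg (not_le.2 ha), if_pos hb]
    · rw [lhatn_eq hn s]; unfold zhatn
      have h1 : ¬ s ≤ 1 := by push_neg; linarith [cgt1 hn]
      rw [if_neg h1, if_neg (not_lt.2 h)]
  · -- one-sided limits and compatibility
    refine ⟨loadn n, loadn n, ⟨?_, rfl, ?_, rfl⟩, ?_⟩
    · intro t _
      exact ((loadn_continuous hn).tendsto t).mono_left nhdsWithin_le_nhds
    · intro t _
      exact ((loadn_continuous hn).tendsto t).mono_left nhdsWithin_le_nhds
    · intro tstar hts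
      have hiv := intermediate_value_Icc (by norm_num : (0:ℝ) ≤ 5/2)
        (thatn_continuous hn).continuousOn
      rw [thatn_zero, thatn_final hn] at hiv
      obtain ⟨sstar, hsmem, hseq⟩ := hiv hts
      refine ⟨sstar, hsmem, hseq, ?_, ?_⟩
      · have h : lhatn n sstar = loadn n tstar := by unfold lhatn; rw [hseq]
        rw [h]; exact Set.mem_insert _ _
      · intro s _ hseq'
        have hl : lhatn n s = loadn n tstar := by unfold lhatn; rw [hseq']
        exact ⟨fun _ => hl, fun _ => hl⟩

end
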